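/- Let Φ : [0,∞) → ℝ be an increasing continuous function with Φ(0)=0 such that t ↦ Φ(√t) is convex on [0,∞). Extend Φ to ℝ by Φ(t)=Φ(|t|). Then for all real a, b: (Φ(a) + Φ(b))/2 ≥ Φ(|a+b|/2) + Φ(|a−b|/2). -/

import Mathlib

theorem stmt_8 (Φ : ℝ → ℝ)
    (hmono : MonotoneOn Φ (Set.Ici 0)) (hcont : ContinuousOn Φ (Set.Ici 0))
    (hΦ0 : Φ 0 = 0)
    (hconv : ConvexOn ℝ (Set.Ici 0) (fun t => Φ (Real.sqrt t))) :
    ∀ a b : ℝ, (Φ |a| + Φ |b|) / 2 ≥ Φ (|a + b| / 2) + Φ (|a - b| / 2) := by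
  intro a b
  set ψ : ℝ → ℝ := fun t => Φ (Real.sqrt t) with hψ
  have hψ0 : ψ 0 = 0 := by simp [hψ, hΦ0]
  have hsuper : ∀ u v : ℝ, 0 ≤ u → 0 ≤ v → ψ u + ψ v ≤ ψ (u + v) := by
    intro u v hu hv
    rcases eq_or_lt_of_le (add_nonneg hu hv) with h | h
    · have hu0 : u = 0 := by linarith
      have hv0 : v = 0 := by linarith
      simp [hu0, hv0, hψ0]
    · have h1 : ψ u ≤ (u / (u + v)) * ψ (u + v) := by
        have := hconv.2 (show (u + v) ∈ Set.Ici (0:ℝ) from add_nonneg hu hv)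
          (show (0:ℝ) ∈ Set.Ici (0:ℝ) from Set.mem_Ici.mpr (le_refl 0))
          (show (0:ℝ) ≤ u / (u + v) by positivity)
          (show (0:ℝ) ≤ v / (u + v) by positivity)
          (show u / (u + v) + v / (u + v) = 1 by rw [← add_div]; rw [div_self h.ne'])
        have harg : (u / (u + v)) • (u + v) + (v / (u + v)) • (0:ℝ) = u := by
          rw [smul_eq_mul, smul_eq_mul, mul_zero, add_zero, div_mul_cancel₀ _ h.ne']
        rw [harg] at this
        simpa [hψ0] using this
      have h2 : ψ v ≤ (v / (u + v)) * ψ (u + v) := by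
        have := hconv.2 (show (u + v) ∈ Set.Ici (0:ℝ) from add_nonneg hu hv)
          (show (0:ℝ) ∈ Set.Ici (0:ℝ) from Set.mem_Ici.mpr (le_refl 0))
          (show (0:ℝ) ≤ v / (u + v) by positivity)
          (show (0:ℝ) ≤ u / (u + v) by positivity)
          (show v / (u + v) + u / (u + v) = 1 by rw [← add_div, add_comm, div_self h.ne'])
        have harg : (v / (u + v)) • (u + v) + (u / (u + v)) • (0:ℝ) = v := by
          rw [smul_eq_mul, smul_eq_mul, mul_zero, add_zero, div_mul_cancel₀ _ h.ne']
        rw [harg] at this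
        simpa [hψ0] using this
      have hsum : (u / (u + v)) + (v / (u + v)) = 1 := by field_simp
      have hkey : (u / (u + v)) * ψ (u + v) + (v / (u + v)) * ψ (u + v) = ψ (u + v) := by
        rw [← add_mul, hsum, one_mul]
      linarith
  have key1 : Φ (|a + b| / 2) + Φ (|a - b| / 2) ≤ ψ ((a ^ 2 + b ^ 2) / 2) := by
    have e1 : Φ (|a + b| / 2) = ψ (((a + b) / 2) ^ 2) := by
      rw [hψ]; simp [Real.sqrt_sq_eq_abs, abs_div]
    have e2 : Φ (|a - b| / 2) = ψ (((a - b) / 2) ^ 2) := by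
      rw [hψ]; simp [Real.sqrt_sq_eq_abs, abs_div]
    rw [e1, e2]
    have := hsuper (((a + b) / 2) ^ 2) (((a - b) / 2) ^ 2) (by positivity) (by positivity)
    have harg : ((a + b) / 2) ^ 2 + ((a - b) / 2) ^ 2 = (a ^ 2 + b ^ 2) / 2 := by ring
    rwa [harg] at this
  have key2 : ψ ((a ^ 2 + b ^ 2) / 2) ≤ (Φ |a| + Φ |b|) / 2 := by
    have := hconv.2 (show (a ^ 2) ∈ Set.Ici (0:ℝ) from Set.mem_Ici.mpr (by positivity))
      (show (b ^ 2) ∈ Set.Ici (0:ℝ) from Set.mem_Ici.mpr (by positivity))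
      (show (0:ℝ) ≤ (1:ℝ)/2 by norm_num)
      (show (0:ℝ) ≤ (1:ℝ)/2 by norm_num)
      (show (1:ℝ)/2 + (1:ℝ)/2 = 1 by norm_num)
    have harg : ((1:ℝ)/2) • (a ^ 2) + ((1:ℝ)/2) • (b ^ 2) = (a ^ 2 + b ^ 2) / 2 := by
      simp; ring
    rw [harg] at this
    have ea : Real.sqrt (a ^ 2) = |a| := Real.sqrt_sq_eq_abs a
    have eb : Real.sqrt (b ^ 2) = |b| := Real.sqrt_sq_eq_abs b
    simp only [hψ] at this ⊢
    rw [ea, eb] at this; simp only [smul_eq_mul] at this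
    linarith
  linarith
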